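/- Let r, s be finite sets, i ∈ r \ s, and for each j let x̄_j ∈ [0,1] and a_{rj}, a_{sj} ∈ ℝ with |x̄_j − a_{rj}| ≤ δ and |x̄_j − a_{sj}| ≤ δ for some δ ∈ (0,1). Define e_r(u) = ∏_{j∈u}(x̄_j − a_{rj}) and e_s(u) = ∏_{j∈u}(x̄_j − a_{sj}). Then |x̄_i(1−x̄_i) · ∑_{k=2}^{|r∩s|} ∑_{v ⊆ r∩s, |v|=k} e_r(r\(v∪{i})) · e_s(s\v) · ∏_{j∈v} x̄_j(1−x̄_j)| ≤ (δ^{|r|+|s|−1}/4)·(1 + 1/(4δ^2))^{|r∩s|}. -/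

import Mathlib

open Finset

/-- Bound on the loopy-BP bias term `B_{rsi}` for `i ∈ r \ s`:
`|x̄_i(1−x̄_i) ∑_{k=2}^{|r∩s|} ∑_{v ⊆ r∩s, |v|=k} e_r(r\(v∪{i})) e_s(s\v) ∏_{j∈v} x̄_j(1−x̄_j)|
  ≤ (δ^{|r|+|s|−1}/4)(1 + 1/(4δ²))^{|r∩s|}`. -/
theorem stmt_10 (ι : Type*) [DecidableEq ι] (r s : Finset ι) (i : ι)
    (hi : i ∈ r \ s) (xb ar as : ι → ℝ) (δ : ℝ) (hδ0 : 0 < δ) (hδ1 : δ < 1)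
    (hx0 : ∀ j, 0 ≤ xb j) (hx1 : ∀ j, xb j ≤ 1)
    (har : ∀ j, |xb j - ar j| ≤ δ) (has : ∀ j, |xb j - as j| ≤ δ) :
    |xb i * (1 - xb i) *
        ∑ k ∈ Finset.Icc 2 (r ∩ s).card,
          ∑ v ∈ Finset.powersetCard k (r ∩ s),
            (∏ j ∈ r \ insert i v, (xb j - ar j)) *
              (∏ j ∈ s \ v, (xb j - as j)) * ∏ j ∈ v, xb j * (1 - xb j)|
      ≤ δ ^ (r.card + s.card - 1) / 4 * (1 + 1 / (4 * δ ^ 2)) ^ (r ∩ s).card := by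
  obtain ⟨hir, his⟩ := Finset.mem_sdiff.mp hi
  set t := (r ∩ s).card with ht
  set n := r.card + s.card - 1 with hn
  have hδne : δ ≠ 0 := ne_of_gt hδ0
  have htr : t + 1 ≤ r.card := by
    have hsub : r ∩ s ⊆ r.erase i := by
      intro j hj
      rw [Finset.mem_erase]
      exact ⟨fun h => his (by simpa [h] using (Finset.mem_inter.mp hj).2),
        (Finset.mem_inter.mp hj).1⟩
    have h1 := Finset.card_le_card hsub
    have h2 := Finset.card_erase_of_mem hir
    have h3 : 1 ≤ r.card := Finset.card_pos.mpr ⟨i, hir⟩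
    omega
  have hts : t ≤ s.card := Finset.card_le_card Finset.inter_subset_right
  have quarter : ∀ j, |xb j * (1 - xb j)| ≤ 1/4 := by
    intro j
    rw [abs_of_nonneg (by nlinarith [hx0 j, hx1 j])]
    nlinarith [sq_nonneg (xb j - 1/2)]
  have key : ∀ k, k ≤ t → ∀ v ∈ Finset.powersetCard k (r ∩ s),
      |(∏ j ∈ r \ insert i v, (xb j - ar j)) *
        (∏ j ∈ s \ v, (xb j - as j)) * ∏ j ∈ v, xb j * (1 - xb j)|
      ≤ δ ^ n * (1/(4*δ^2)) ^ k := by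
    intro k hkt v hv
    rw [Finset.mem_powersetCard] at hv
    obtain ⟨hvsub, hvcard⟩ := hv
    have hiv : i ∉ v := fun h => his (Finset.mem_inter.mp (hvsub h)).2
    have hins : insert i v ⊆ r := by
      intro j hj
      rcases Finset.mem_insert.mp hj with h | h
      · exact h ▸ hir
      · exact (Finset.mem_inter.mp (hvsub h)).1
    have hcard1 : (r \ insert i v).card = r.card - (k+1) := by
      rw [Finset.card_sdiff_of_subset hins, Finset.card_insert_of_notMem hiv, hvcard]
    have hvs : v ⊆ s := fun j hj => (Finset.mem_inter.mp (hvsub hj)).2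
    have hcard2 : (s \ v).card = s.card - k := by rw [Finset.card_sdiff_of_subset hvs, hvcard]
    have b1 : |∏ j ∈ r \ insert i v, (xb j - ar j)| ≤ δ ^ (r.card - (k+1)) := by
      rw [abs_prod, ← hcard1, ← Finset.prod_const]
      exact Finset.prod_le_prod (fun j _ => abs_nonneg _) (fun j _ => har j)
    have b2 : |∏ j ∈ s \ v, (xb j - as j)| ≤ δ ^ (s.card - k) := by
      rw [abs_prod, ← hcard2, ← Finset.prod_const]
      exact Finset.prod_le_prod (fun j _ => abs_nonneg _) (fun j _ => has j)
    have b3 : |∏ j ∈ v, xb j * (1 - xb j)| ≤ (1/4) ^ k := by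
      rw [abs_prod, ← hvcard, ← Finset.prod_const]
      exact Finset.prod_le_prod (fun j _ => abs_nonneg _) (fun j _ => quarter j)
    have eq1 : δ ^ (r.card - (k+1)) * δ ^ (s.card - k) * (1/4:ℝ)^k
        = δ ^ n * (1/(4*δ^2))^k := by
      have h1 : δ ^ n = δ ^ ((r.card-(k+1)) + (s.card-k)) * (δ^2)^k := by
        rw [← pow_mul, ← pow_add]
        congr 1
        omega
      have h4 : ((δ:ℝ)^2)^k * (1/(4*δ^2))^k = (1/4:ℝ)^k := by
        rw [← mul_pow]
        congr 1
        field_simp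
      rw [h1, ← h4, pow_add]
      ring
    calc |(∏ j ∈ r \ insert i v, (xb j - ar j)) *
        (∏ j ∈ s \ v, (xb j - as j)) * ∏ j ∈ v, xb j * (1 - xb j)|
        = |∏ j ∈ r \ insert i v, (xb j - ar j)| *
          |∏ j ∈ s \ v, (xb j - as j)| * |∏ j ∈ v, xb j * (1 - xb j)| := by
          rw [abs_mul, abs_mul]
      _ ≤ δ ^ (r.card - (k+1)) * δ ^ (s.card - k) * (1/4)^k := by
          gcongr <;> positivity
      _ = δ ^ n * (1/(4*δ^2))^k := eq1
  calc |xb i * (1 - xb i) *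
        ∑ k ∈ Finset.Icc 2 t,
          ∑ v ∈ Finset.powersetCard k (r ∩ s),
            (∏ j ∈ r \ insert i v, (xb j - ar j)) *
              (∏ j ∈ s \ v, (xb j - as j)) * ∏ j ∈ v, xb j * (1 - xb j)|
      = |xb i * (1 - xb i)| * |∑ k ∈ Finset.Icc 2 t,
          ∑ v ∈ Finset.powersetCard k (r ∩ s),
            (∏ j ∈ r \ insert i v, (xb j - ar j)) *
              (∏ j ∈ s \ v, (xb j - as j)) * ∏ j ∈ v, xb j * (1 - xb j)| := abs_mul _ _
    _ ≤ (1/4) * ∑ k ∈ Finset.Icc 2 t,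
          ∑ v ∈ Finset.powersetCard k (r ∩ s), δ ^ n * (1/(4*δ^2)) ^ k := by
        apply mul_le_mul (quarter i) ?_ (abs_nonneg _) (by norm_num)
        calc |∑ k ∈ Finset.Icc 2 t, ∑ v ∈ Finset.powersetCard k (r ∩ s),
              (∏ j ∈ r \ insert i v, (xb j - ar j)) *
              (∏ j ∈ s \ v, (xb j - as j)) * ∏ j ∈ v, xb j * (1 - xb j)|
            ≤ ∑ k ∈ Finset.Icc 2 t, |∑ v ∈ Finset.powersetCard k (r ∩ s),
              (∏ j ∈ r \ insert i v, (xb j - ar j)) *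
              (∏ j ∈ s \ v, (xb j - as j)) * ∏ j ∈ v, xb j * (1 - xb j)| :=
              Finset.abs_sum_le_sum_abs _ _
          _ ≤ ∑ k ∈ Finset.Icc 2 t, ∑ v ∈ Finset.powersetCard k (r ∩ s),
              |(∏ j ∈ r \ insert i v, (xb j - ar j)) *
              (∏ j ∈ s \ v, (xb j - as j)) * ∏ j ∈ v, xb j * (1 - xb j)| :=
              Finset.sum_le_sum fun k _ => Finset.abs_sum_le_sum_abs _ _
          _ ≤ _ := Finset.sum_le_sum fun k hk => Finset.sum_le_sum fun v hv =>
              key k (Finset.mem_Icc.mp hk).2 v hv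
    _ = (1/4) * ∑ k ∈ Finset.Icc 2 t,
          (t.choose k : ℝ) * (δ ^ n * (1/(4*δ^2)) ^ k) := by
        congr 1
        refine Finset.sum_congr rfl fun k _ => ?_
        rw [Finset.sum_const, Finset.card_powersetCard, nsmul_eq_mul]
    _ ≤ (1/4) * ∑ k ∈ Finset.range (t+1),
          (t.choose k : ℝ) * (δ ^ n * (1/(4*δ^2)) ^ k) := by
        apply mul_le_mul_of_nonneg_left _ (by norm_num)
        apply Finset.sum_le_sum_of_subset_of_nonneg
        · intro k hk
          rw [Finset.mem_range]
          have := (Finset.mem_Icc.mp hk).2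
          omega
        · intro k _ _
          positivity
    _ = δ ^ n / 4 * (1 + 1 / (4 * δ ^ 2)) ^ t := by
        rw [add_comm (1:ℝ), add_pow, Finset.mul_sum, Finset.mul_sum]
        refine Finset.sum_congr rfl fun k _ => ?_
        rw [one_pow]
        ring
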